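/- Under the iterative construction of the sequences (k_i) and (b_i), for every i ≥ 2 the function b_i is constant on each interval [k, k+1) for every k ∈ ℕ, i.e. b_i(x) = b_i(k) whenever k ≤ x < k+1. -/

import Mathlib

lemma aux_floor (m n : ℕ) (hm : 0 < m) (x : ℝ) (h1 : (n : ℝ) ≤ x)
    (h2 : x < (n : ℝ) + 1) : ⌊x / (m : ℝ)⌋ = (n / m : ℕ) := by
  have hm' : (0 : ℝ) < m := by exact_mod_cast hm
  have hq1 : (m * (n / m) : ℕ) ≤ n := Nat.mul_div_le n m
  have hq2 : n < m * (n / m) + m := by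
    have h1 := Nat.div_add_mod n m
    have h2 := Nat.mod_lt n hm
    omega
  rw [Int.floor_eq_iff]
  constructor
  · push_cast
    rw [le_div_iff₀ hm']
    calc ((n / m : ℕ) : ℝ) * m = ((m * (n / m) : ℕ) : ℝ) := by push_cast; ring
    _ ≤ (n : ℝ) := by exact_mod_cast hq1
    _ ≤ x := h1
  · push_cast
    rw [div_lt_iff₀ hm']
    calc x < (n : ℝ) + 1 := h2
    _ ≤ ((m * (n / m) + m : ℕ) : ℝ) := by exact_mod_cast Nat.succ_le_of_lt hq2
    _ = (((n / m : ℕ) : ℝ) + 1) * m := by push_cast; ring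

lemma aux_fract (m n : ℕ) (hm : 0 < m) (x : ℝ) (h1 : (n : ℝ) ≤ x)
    (h2 : x < (n : ℝ) + 1) :
    Int.fract (x / m) = (x - n) / m + Int.fract ((n : ℝ) / m) := by
  have hm' : (0 : ℝ) ≠ m := by positivity
  have hx := aux_floor m n hm x h1 h2
  have hn := aux_floor m n hm (n : ℝ) le_rfl (by linarith)
  unfold Int.fract
  rw [hx, hn]
  field_simp
  ring

lemma aux_comb (a c n : ℕ) (ha : 0 < a) (hc : 0 < c) (x : ℝ) (h1 : (n : ℝ) ≤ x)
    (h2 : x < (n : ℝ) + 1) :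
    Int.fract (x / a) - ((c : ℝ) / a) * Int.fract (x / c)
      = Int.fract ((n : ℝ) / a) - ((c : ℝ) / a) * Int.fract ((n : ℝ) / c) := by
  rw [aux_fract a n ha x h1 h2, aux_fract c n hc x h1 h2]
  have ha' : (a : ℝ) ≠ 0 := by positivity
  have hc' : (c : ℝ) ≠ 0 := by positivity
  field_simp
  ring

/-- Each `b_i`, `i ≥ 2`, is constant on each interval `[n, n+1)`, `n ∈ ℕ`. -/
theorem stmt_8 (k : ℕ → ℕ) (b : ℕ → ℝ → ℝ)
    (hk1 : k 1 = 1) (hk2 : k 2 = 2)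
    (hb2 : ∀ x : ℝ, b 2 x
      = Int.fract (x / (k 1 : ℝ)) - ((k 2 : ℝ) / (k 1 : ℝ)) * Int.fract (x / (k 2 : ℝ)))
    (hmono : ∀ i : ℕ, 2 ≤ i → k i < k (i + 1))
    (hne : ∀ i : ℕ, 2 ≤ i → b i ((k (i + 1) : ℝ)) ≠ b i ((k i : ℝ)))
    (hleast : ∀ i : ℕ, 2 ≤ i → ∀ m : ℕ, k i < m → m < k (i + 1) → b i (m : ℝ) = b i ((k i : ℝ)))
    (hbrec : ∀ i : ℕ, 2 ≤ i → ∀ x : ℝ, b (i + 1) x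
      = b i x + (1 + b i ((k i : ℝ)))
          * (Int.fract (x / (k i : ℝ))
            - ((k (i + 1) : ℝ) / (k i : ℝ)) * Int.fract (x / (k (i + 1) : ℝ)))) :
    ∀ i : ℕ, 2 ≤ i → ∀ n : ℕ, ∀ x : ℝ, (n : ℝ) ≤ x → x < (n : ℝ) + 1 → b i x = b i (n : ℝ) := by
  have hkpos : ∀ i : ℕ, 2 ≤ i → 0 < k i := by
    intro i hi
    induction i with
    | zero => omega
    | succ j ih =>
      rcases Nat.lt_or_ge j 2 with h | h
      · have hj : j = 1 := by omega
        subst hj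
        show 0 < k 2
        omega
      · exact Nat.lt_trans (ih h) (hmono j h)
  intro i hi
  induction i with
  | zero => omega
  | succ j ih =>
    rcases Nat.lt_or_ge j 2 with h | h
    · -- j+1 = 2
      have hj : j = 1 := by omega
      subst hj
      intro n x h1 h2
      rw [hb2, hb2, hk1, hk2]
      exact aux_comb 1 2 n one_pos two_pos x h1 h2
    · intro n x h1 h2
      rw [hbrec j h, hbrec j h, ih h n x h1 h2,
        aux_comb (k j) (k (j + 1)) n (hkpos j h) (hkpos (j + 1) (by omega)) x h1 h2]
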